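/- Let A = KΔ(Ã_{p,q}) and F, G the regular stratifying system of size p+q−2 of simple regular modules. Then (S_{p+q−1}, F_1, ..., F_{p−1}, G_1, ..., G_{q−1}, P_0) is a complete stratifying system of size p+q over A. -/

import Mathlib

open CategoryTheory CategoryTheory.Limits

noncomputable section

/-- `Hom_A(M,N) = 0`. -/
def HomZero (R : Type) [Ring R] (M N : ModuleCat R) : Prop := ∀ f : M ⟶ N, f = 0

/-- `Ext¹_A(M,N) = 0`, expressed by: every short exact sequence `0 → N → E → M → 0`
in `mod A` splits. -/
def Ext1Zero (R : Type) [Ring R] (M N : ModuleCat R) : Prop :=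
  ∀ (S : CategoryTheory.ShortComplex (ModuleCat R)), S.ShortExact →
    (S.X₁ ≅ N) → (S.X₃ ≅ M) → Nonempty S.Splitting

/-- An indecomposable module: nonzero, and any direct sum decomposition is trivial. -/
def Indec (R : Type) [Ring R] (M : ModuleCat R) : Prop :=
  ¬ IsZero M ∧ ∀ N P : ModuleCat R, Nonempty (M ≅ N ⊞ P) → IsZero N ∨ IsZero P

/-- A stratifying system of size `t`: a sequence `X₁, …, X_t` of indecomposable modules with
`Hom(X_j, X_i) = 0` for `j > i` and `Ext¹(X_j, X_i) = 0` for `j ≥ i`. -/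
def IsStratSys (R : Type) [Ring R] {t : ℕ} (X : Fin t → ModuleCat R) : Prop :=
  (∀ i, Indec R (X i)) ∧
  (∀ i j : Fin t, i < j → HomZero R (X j) (X i)) ∧
  (∀ i j : Fin t, i ≤ j → Ext1Zero R (X j) (X i))

/-- `S` is a complete list of `n` pairwise non-isomorphic simple `R`-modules; the number `n`
is then the rank of the Grothendieck group `K₀(R)`. -/
def IsCompleteSimpleList (R : Type) [Ring R] {n : ℕ} (S : Fin n → ModuleCat R) : Prop :=
  (∀ i, IsSimpleModule R (S i)) ∧
  (∀ i j : Fin n, i ≠ j → IsEmpty (S i ≅ S j)) ∧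
  (∀ M : ModuleCat R, IsSimpleModule R M → ∃ i, Nonempty (M ≅ S i))

/-- The arrows of the canonically oriented Euclidean quiver `Δ(Ã_{p,q})`, on vertices
`0, 1, …, p+q-1`: two paths `p-1 → ⋯ → 1 → 0` and `p+q-2 → ⋯ → p → 0`, together with the
arrows `p+q-1 → p-1` and `p+q-1 → p+q-2`. -/
def DeltaArrow (p q a b : ℕ) : Prop :=
  (b + 1 = a ∧ a ≤ p - 1) ∨ (b = 0 ∧ a = p) ∨
  (b + 1 = a ∧ p + 1 ≤ a ∧ a ≤ p + q - 2) ∨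
  (a = p + q - 1 ∧ (b = p - 1 ∨ b = p + q - 2))


private lemma indec_of_simple' {R : Type} [Ring R] (M : ModuleCat R) (h : IsSimpleModule R M) :
    Indec R M := by
  have : Simple M := (simple_iff_isSimpleModule' M).mpr h
  obtain ⟨h1, h2⟩ := indecomposable_of_simple M
  exact ⟨h1, fun N P ⟨i⟩ => h2 N P i⟩

private lemma homZero_of_simple' {R : Type} [Ring R] (M N : ModuleCat R)
    (hM : IsSimpleModule R M) (hN : IsSimpleModule R N) (hni : IsEmpty (M ≅ N)) :
    HomZero R M N := by
  intro f
  rcases LinearMap.bijective_or_eq_zero f.hom with hb | h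
  · exact (hni.false ((LinearEquiv.ofBijective f.hom hb).toModuleIso)).elim
  · ext x; simp [h]

/-- Let `A = KΔ(Ã_{p,q})`, `1 ≤ p ≤ q`, with simple modules
`S₀, …, S_{p+q-1}`, where `S₀ = P₀` is simple projective (vertex `0` is the unique sink),
`S_{p+q-1} = I_{p+q-1}` is simple injective (vertex `p+q-1` is the unique source), and
`F_i = S_{p-i}` (`i = 1, …, p-1`), `G_j = S_{p+q-1-j}` (`j = 1, …, q-1`) are the simple
regular modules. Then `(S_{p+q-1}, F₁, …, F_{p-1}, G₁, …, G_{q-1}, P₀)` is a complete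
stratifying system of size `p + q` over `A`. -/
theorem delta_complete_stratifying_system (K A : Type) [Field K] [Ring A] [Algebra K A]
    [FiniteDimensional K A] (p q : ℕ) (hp : 1 ≤ p) (hpq : p ≤ q)
    (S : Fin (p + q) → ModuleCat A) (hS : IsCompleteSimpleList A S)
    (hdelta : ∀ a b : Fin (p + q),
      (¬ Ext1Zero A (S a) (S b)) ↔ DeltaArrow p q (a : ℕ) (b : ℕ))
    (hproj : Projective (S ⟨0, by omega⟩))
    (hinj : Injective (S ⟨p + q - 1, by omega⟩))
    (W : Fin (p + q) → ModuleCat A)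
    (hWdef : ∀ k : Fin (p + q), W k =
      if (k : ℕ) = 0 then S ⟨p + q - 1, by omega⟩
      else if h1 : (k : ℕ) ≤ p - 1 then S ⟨p - (k : ℕ), by omega⟩
      else if h2 : (k : ℕ) ≤ p + q - 2 then S ⟨2 * p + q - 2 - (k : ℕ), by omega⟩
      else S ⟨0, by omega⟩) :
    IsStratSys A W := by
  obtain ⟨hsimp, hnoniso, -⟩ := hS
  set σ : ℕ → ℕ := fun k => if k = 0 then p + q - 1 else if k ≤ p - 1 then p - k
    else if k ≤ p + q - 2 then 2 * p + q - 2 - k else 0 with hσ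
  have hmem : ∀ k : Fin (p + q), σ (k : ℕ) < p + q := by
    intro k; have := k.isLt; simp only [hσ]; split_ifs <;> omega
  have hWS : ∀ k : Fin (p + q), W k = S ⟨σ (k : ℕ), hmem k⟩ := by
    intro k
    rw [hWdef k]
    split_ifs with h0 h1 h2 <;>
      (congr 1; apply Fin.ext; simp only [hσ]; split_ifs <;> omega)
  have hinjσ : ∀ a b : ℕ, a < p + q → b < p + q → σ a = σ b → a = b := by
    intro a b ha hb; simp only [hσ]; split_ifs <;> omega
  have hnoarrow : ∀ i j : ℕ, i < p + q → j < p + q → i ≤ j →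
      ¬ DeltaArrow p q (σ j) (σ i) := by
    intro i j hi hj hij
    simp only [hσ]
    split_ifs <;> (intro h; unfold DeltaArrow at h; omega)
  refine ⟨?_, ?_, ?_⟩
  · intro i
    rw [hWS i]
    exact indec_of_simple' _ (hsimp _)
  · intro i j hij
    rw [hWS i, hWS j]
    refine homZero_of_simple' _ _ (hsimp _) (hsimp _) (hnoniso _ _ ?_)
    intro h
    have : σ (j : ℕ) = σ (i : ℕ) := congrArg Fin.val h
    have := hinjσ _ _ j.isLt i.isLt this
    omega
  · intro i j hij
    by_contra hne
    have := (hdelta ⟨σ (j : ℕ), hmem j⟩ ⟨σ (i : ℕ), hmem i⟩).mp (by rw [hWS i, hWS j] at hne; exact hne)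
    exact hnoarrow (i : ℕ) (j : ℕ) i.isLt j.isLt hij this
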